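/- At any global minimum of L(σ_1,...,σ_L) = (1/2)(∏_{ℓ=1}^L σ_ℓ − σ_*)² with all σ_ℓ ≠ 0, the (i,j) entry of the Hessian of L equals σ_*²/(σ_i σ_j); consequently the largest eigenvalue of the Hessian equals ∑_{i=1}^L σ_*²/σ_i². -/

import Mathlib

open Matrix Finset

lemma prod_hasFDerivAt (L : ℕ) (x : Fin L → ℝ) :
    HasFDerivAt (fun y : Fin L → ℝ => ∏ ℓ, y ℓ)
      (∑ i, (∏ j ∈ univ.erase i, x j) • ContinuousLinearMap.proj (R := ℝ) (φ := fun _ : Fin L => ℝ) i) x :=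
  hasFDerivAt_finset_prod

lemma fderiv_f (L : ℕ) (σstar : ℝ) (f : (Fin L → ℝ) → ℝ)
    (hf : ∀ x, f x = (1 / 2) * ((∏ ℓ, x ℓ) - σstar) ^ 2) (x : Fin L → ℝ) (j : Fin L) :
    fderiv ℝ f x (Pi.single j 1) =
      ((∏ ℓ, x ℓ) - σstar) * ∏ k ∈ univ.erase j, x k := by
  have hfe : f = fun y => (1/2 : ℝ) * (((∏ ℓ, y ℓ) - σstar) * ((∏ ℓ, y ℓ) - σstar)) :=
    funext fun y => by rw [hf]; ring
  have hg := (prod_hasFDerivAt L x).sub_const σstar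
  have h2 := (hg.mul hg).const_mul ((1:ℝ)/2)
  rw [hfe, HasFDerivAt.fderiv (f := fun y : Fin L → ℝ => (1/2 : ℝ) * (((∏ ℓ, y ℓ) - σstar) * ((∏ ℓ, y ℓ) - σstar))) h2]
  simp [ContinuousLinearMap.sum_apply, Pi.single_apply, Finset.sum_ite_eq', mul_comm]
  ring

lemma hessian_entry (L : ℕ) (σstar : ℝ) (σ : Fin L → ℝ) (hmin : ∏ ℓ, σ ℓ = σstar)
    (f : (Fin L → ℝ) → ℝ)
    (hf : ∀ x, f x = (1 / 2) * ((∏ ℓ, x ℓ) - σstar) ^ 2) (i j : Fin L) :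
    fderiv ℝ (fun x => fderiv ℝ f x (Pi.single j 1)) σ (Pi.single i 1) =
      (∏ k ∈ univ.erase i, σ k) * (∏ k ∈ univ.erase j, σ k) := by
  have hge : (fun x => fderiv ℝ f x (Pi.single j 1)) =
      fun x => ((∏ ℓ, x ℓ) - σstar) * ∏ k ∈ univ.erase j, x k :=
    funext fun x => fderiv_f L σstar f hf x j
  have hg := (prod_hasFDerivAt L σ).sub_const σstar
  have hQ : HasFDerivAt (fun y : Fin L → ℝ => ∏ k ∈ univ.erase j, y k)
      (∑ k ∈ univ.erase j, (∏ m ∈ (univ.erase j).erase k, σ m) •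
        ContinuousLinearMap.proj (R := ℝ) (φ := fun _ : Fin L => ℝ) k) σ :=
    hasFDerivAt_finset_prod
  have h2 := hg.mul hQ
  rw [hge, HasFDerivAt.fderiv (f := fun x : Fin L → ℝ => ((∏ ℓ, x ℓ) - σstar) * ∏ k ∈ univ.erase j, x k) h2]
  rw [hmin]
  simp [ContinuousLinearMap.sum_apply, Pi.single_apply, Finset.sum_ite_eq', mul_comm]

/-- At a global minimum of `f(σ) = (1/2)(∏ σ_ℓ − σ_*)²` (i.e. `∏ σ_ℓ = σ_*`)
with all `σ_ℓ ≠ 0`, the `(i,j)` entry of the Hessian equals `σ_*²/(σ_i σ_j)`,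
and the largest eigenvalue of the Hessian equals `∑_i σ_*²/σ_i²`. -/
theorem hessian_at_global_minimum
    (L : ℕ) (hL : 1 ≤ L) (σstar : ℝ) (hσstar : 0 < σstar)
    (σ : Fin L → ℝ) (hmin : ∏ ℓ, σ ℓ = σstar) (hne : ∀ ℓ, σ ℓ ≠ 0)
    (f : (Fin L → ℝ) → ℝ)
    (hf : ∀ x, f x = (1 / 2) * ((∏ ℓ, x ℓ) - σstar) ^ 2)
    (H : Matrix (Fin L) (Fin L) ℝ)
    (hH : ∀ i j, H i j =
      fderiv ℝ (fun x => fderiv ℝ f x (Pi.single j 1)) σ (Pi.single i 1)) :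
    (∀ i j, H i j = σstar ^ 2 / (σ i * σ j)) ∧
    (H.mulVec (fun i => σstar / σ i) =
      (∑ i, σstar ^ 2 / (σ i) ^ 2) • (fun i => σstar / σ i)) ∧
    (∀ (μ : ℝ) (v : Fin L → ℝ), v ≠ 0 → H.mulVec v = μ • v →
      μ ≤ ∑ i, σstar ^ 2 / (σ i) ^ 2) := by
  have hprod : ∀ i : Fin L, ∏ k ∈ univ.erase i, σ k = σstar / σ i := by
    intro i
    have := Finset.mul_prod_erase univ σ (Finset.mem_univ i)
    rw [hmin] at this
    field_simp [hne i]
    linarith [this]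
  have h1 : ∀ i j, H i j = σstar ^ 2 / (σ i * σ j) := by
    intro i j
    rw [hH, hessian_entry L σstar σ hmin f hf, hprod, hprod]
    field_simp [hne i, hne j]
  refine ⟨h1, ?_, ?_⟩
  · funext i
    simp only [mulVec, dotProduct, Pi.smul_apply, smul_eq_mul]
    calc ∑ j, H i j * (σstar / σ j)
        = ∑ j, (σstar ^ 2 / (σ j) ^ 2) * (σstar / σ i) := by
          refine Finset.sum_congr rfl fun j _ => ?_
          rw [h1]
          field_simp
      _ = (∑ j, σstar ^ 2 / (σ j) ^ 2) * (σstar / σ i) := by rw [Finset.sum_mul]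
  · intro μ v hv hev
    set w : Fin L → ℝ := fun i => σstar / σ i with hw
    set c : ℝ := ∑ j, w j * v j with hc
    set S : ℝ := ∑ i, σstar ^ 2 / (σ i) ^ 2 with hS
    have hSnn : 0 ≤ S := Finset.sum_nonneg fun i _ => by positivity
    have hmv : ∀ i, H.mulVec v i = w i * c := by
      intro i
      simp only [mulVec, dotProduct, hc, Finset.mul_sum]
      refine Finset.sum_congr rfl fun j _ => ?_
      rw [h1, hw]
      field_simp
    have hev' : ∀ i, μ * v i = w i * c := fun i => by
      rw [← hmv i, hev]; rfl
    rcases eq_or_ne μ 0 with hμ | hμ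
    · rw [hμ]; exact hSnn
    · have hcS : μ * c = c * S := by
        calc μ * c = ∑ j, μ * (w j * v j) := by rw [hc, Finset.mul_sum]
          _ = ∑ j, w j * (μ * v j) := Finset.sum_congr rfl fun j _ => by ring
          _ = ∑ j, c * (σstar ^ 2 / (σ j) ^ 2) := by
              refine Finset.sum_congr rfl fun j _ => ?_
              rw [hev' j, hw]
              field_simp
          _ = c * S := by rw [hS, Finset.mul_sum]
      have hcne : c ≠ 0 := by
        intro h0
        apply hv
        funext i
        have := hev' i
        rw [h0, mul_zero] at this
        have : v i = 0 := by
          rcases mul_eq_zero.mp this with h | h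
          · exact absurd h hμ
          · exact h
        simpa using this
      have : μ = S := by
        have := mul_right_cancel₀ hcne (by linarith [hcS] : μ * c = S * c)
        exact this
      linarith
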